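/- For every integer n ≥ 2, every vector p = (p_1,…,p_n) ∈ [0,1]^n, and every real number q with max_{i∈[n]} p_i ≤ q ≤ 1 and q > 0, there exists a probability distribution θ on {0,1}^n such that P_θ(c_i = 1) = p_i for every i ∈ [n] and P_θ(c_i = 1, c_j = 1) = p_i p_j / q for every pair 1 ≤ i < j ≤ n. -/

import Mathlib

open Finset

noncomputable section

/-- Probability that at least `k` of the `n` coordinates equal `1` under the pmf `θ` on `{0,1}^n`. -/
def probGE (n : ℕ) (θ : (Fin n → Bool) → ℝ) (k : ℕ) : ℝ :=
  ∑ c ∈ Finset.univ.filter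
      (fun c : Fin n → Bool => k ≤ (Finset.univ.filter (fun i => c i = true)).card), θ c

/-- Probability that all `n` coordinates equal `1` under the pmf `θ` on `{0,1}^n`. -/
def probAll (n : ℕ) (θ : (Fin n → Bool) → ℝ) : ℝ :=
  ∑ c ∈ Finset.univ.filter (fun c : Fin n → Bool => ∀ i, c i = true), θ c

/-- `θ` is a probability mass function on `{0,1}^n`. -/
def IsDist (n : ℕ) (θ : (Fin n → Bool) → ℝ) : Prop :=
  (∀ c, 0 ≤ θ c) ∧ (∑ c, θ c = 1)

/-- Univariate marginal probability `P_θ(c_i = 1)`. -/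
def Marg (n : ℕ) (θ : (Fin n → Bool) → ℝ) (i : Fin n) : ℝ :=
  ∑ c ∈ Finset.univ.filter (fun c : Fin n → Bool => c i = true), θ c

/-- Bivariate probability `P_θ(c_i = 1, c_j = 1)`. -/
def Biv (n : ℕ) (θ : (Fin n → Bool) → ℝ) (i j : Fin n) : ℝ :=
  ∑ c ∈ Finset.univ.filter (fun c : Fin n → Bool => c i = true ∧ c j = true), θ c

/-- `θ` is a pairwise independent distribution with marginal vector `p`. -/
def PairwiseIndep (n : ℕ) (p : Fin n → ℝ) (θ : (Fin n → Bool) → ℝ) : Prop :=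
  IsDist n θ ∧ (∀ i, Marg n θ i = p i) ∧
    (∀ i j : Fin n, i < j → Biv n θ i j = p i * p j)


lemma keySum (n : ℕ) (g : Fin n → Bool → ℝ) (hg : ∀ j, g j false + g j true = 1)
    (s : Finset (Fin n)) :
    ∑ c ∈ Finset.univ.filter (fun c : Fin n → Bool => ∀ i ∈ s, c i = true),
      ∏ j, g j (c j) = ∏ i ∈ s, g i true := by
  rw [Finset.sum_filter]
  set G : Fin n → Bool → ℝ := fun j b => if j ∈ s then (if b then g j true else 0) else g j b
    with hG
  have h1 : ∀ c : Fin n → Bool,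
      (if (∀ i ∈ s, c i = true) then ∏ j, g j (c j) else 0) = ∏ j, G j (c j) := by
    intro c
    by_cases h : ∀ i ∈ s, c i = true
    · rw [if_pos h]
      refine Finset.prod_congr rfl fun j _ => ?_
      by_cases hj : j ∈ s
      · simp [hG, hj, h j hj]
      · simp [hG, hj]
    · rw [if_neg h]
      push_neg at h
      obtain ⟨i, his, hci⟩ := h
      symm
      apply Finset.prod_eq_zero (Finset.mem_univ i)
      simp [hG, his, Bool.not_eq_true] at hci ⊢
      simp [hci]
  simp_rw [h1]
  rw [← Fintype.piFinset_univ, ← Finset.prod_univ_sum]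
  have h2 : ∀ j, (∑ b, G j b) = if j ∈ s then g j true else 1 := by
    intro j
    rw [Fintype.sum_bool]
    by_cases hj : j ∈ s <;> simp [hG, hj, ← hg j] <;> ring
  simp_rw [h2]
  rw [Finset.prod_ite_mem, Finset.univ_inter]

theorem stmt_0 (n : ℕ) (hn : 2 ≤ n) (p : Fin n → ℝ)
    (hp0 : ∀ i, 0 ≤ p i) (hp1 : ∀ i, p i ≤ 1)
    (q : ℝ) (hq0 : 0 < q) (hq1 : q ≤ 1) (hqp : ∀ i, p i ≤ q) :
    ∃ θ : (Fin n → Bool) → ℝ, IsDist n θ ∧ (∀ i, Marg n θ i = p i) ∧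
      (∀ i j : Fin n, i < j → Biv n θ i j = p i * p j / q) := by
  set g : Fin n → Bool → ℝ := fun j b => if b then p j / q else 1 - p j / q with hg
  have hgsum : ∀ j, g j false + g j true = 1 := by intro j; simp [hg]
  have hr0 : ∀ j, 0 ≤ p j / q := fun j => div_nonneg (hp0 j) hq0.le
  have hr1 : ∀ j, p j / q ≤ 1 := fun j => (div_le_one hq0).mpr (hqp j)
  have hgnn : ∀ j b, 0 ≤ g j b := by
    intro j b; cases b <;> simp [hg, hr0 j]
    linarith [hr1 j]
  set θ : (Fin n → Bool) → ℝ :=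
    fun c => q * ∏ j, g j (c j) + (if c = (fun _ => false) then 1 - q else 0) with hθ
  have hsplit : ∀ (F : Finset (Fin n → Bool)),
      ∑ c ∈ F, θ c = q * (∑ c ∈ F, ∏ j, g j (c j))
        + ∑ c ∈ F, (if c = (fun _ => false) then 1 - q else 0) := by
    intro F
    rw [Finset.mul_sum, ← Finset.sum_add_distrib]
  refine ⟨θ, ⟨?_, ?_⟩, ?_, ?_⟩
  · intro c
    have h1 : 0 ≤ ∏ j, g j (c j) := Finset.prod_nonneg fun j _ => hgnn j (c j)
    have h2 : (0:ℝ) ≤ if c = (fun _ => false) then 1 - q else 0 := by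
      split <;> linarith
    positivity
  · rw [hsplit]
    have h1 : ∑ c : Fin n → Bool, ∏ j, g j (c j) = 1 := by
      have := keySum n g hgsum ∅
      simpa using this
    have h2 : ∑ c : Fin n → Bool, (if c = (fun _ => false) then 1 - q else 0) = 1 - q := by
      rw [Finset.sum_ite_eq' Finset.univ (fun _ => false) (fun _ => 1 - q)]
      simp
    rw [h1, h2]; ring
  · intro i
    rw [Marg, hsplit]
    have h2 : ∑ c ∈ Finset.univ.filter (fun c : Fin n → Bool => c i = true),
        (if c = (fun _ => false) then 1 - q else 0) = 0 := by
      apply Finset.sum_eq_zero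
      intro c hc
      rw [Finset.mem_filter] at hc
      rw [if_neg]
      intro h
      rw [h] at hc
      simp at hc
    have h1 : ∑ c ∈ Finset.univ.filter (fun c : Fin n → Bool => c i = true),
        ∏ j, g j (c j) = p i / q := by
      have hfe : Finset.univ.filter (fun c : Fin n → Bool => c i = true)
          = Finset.univ.filter (fun c : Fin n → Bool => ∀ k ∈ ({i} : Finset (Fin n)), c k = true) := by
        apply Finset.filter_congr; intro c _; simp
      rw [hfe, keySum n g hgsum {i}]
      simp [hg]
    rw [h1, h2]
    field_simp
    ring
  · intro i j hij
    rw [Biv, hsplit]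
    have h2 : ∑ c ∈ Finset.univ.filter (fun c : Fin n → Bool => c i = true ∧ c j = true),
        (if c = (fun _ => false) then 1 - q else 0) = 0 := by
      apply Finset.sum_eq_zero
      intro c hc
      rw [Finset.mem_filter] at hc
      rw [if_neg]
      intro h
      rw [h] at hc
      simp at hc
    have h1 : ∑ c ∈ Finset.univ.filter (fun c : Fin n → Bool => c i = true ∧ c j = true),
        ∏ k, g k (c k) = (p i / q) * (p j / q) := by
      have hfe : Finset.univ.filter (fun c : Fin n → Bool => c i = true ∧ c j = true)
          = Finset.univ.filter (fun c : Fin n → Bool => ∀ k ∈ ({i, j} : Finset (Fin n)), c k = true) := by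
        apply Finset.filter_congr; intro c _
        simp [forall_eq_or_imp]
      rw [hfe, keySum n g hgsum {i, j}, Finset.prod_pair hij.ne]
      simp [hg]
    rw [h1, h2]
    field_simp
    ring
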